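/- (q-Lucas theorem) Let n, k, d be natural numbers with d ≥ 1, and write n = n₁d + n₀, k = k₁d + k₀ with 0 ≤ n₀, k₀ ≤ d−1. Then the Gaussian binomial coefficient [n choose k]_q is congruent to (n₁ choose k₁)·[n₀ choose k₀]_q modulo the d-th cyclotomic polynomial Φ_d(q). In particular, if ξ is a primitive d-th root of unity, [n choose k]_ξ = (n₁ choose k₁)·[n₀ choose k₀]_ξ. -/

import Mathlib

open Polynomial

/-- The Gaussian binomial coefficient `[n choose k]_q` as a polynomial in `ℤ[q]`,
defined via the `q`-Pascal recurrence
`[n+1 choose k+1]_q = [n choose k]_q + q^(k+1) [n choose k+1]_q`,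
which is equivalent to `[n]_q! / ([k]_q! [n-k]_q!)`. -/
noncomputable def qbinom : ℕ → ℕ → Polynomial ℤ
  | _, 0 => 1
  | 0, _ + 1 => 0
  | n + 1, k + 1 => qbinom n k + Polynomial.X ^ (k + 1) * qbinom n (k + 1)

lemma qbinom_zero_right (n : ℕ) : qbinom n 0 = 1 := by cases n <;> rfl

lemma qbinom_succ_succ (n k : ℕ) :
    qbinom (n+1) (k+1) = qbinom n k + Polynomial.X ^ (k + 1) * qbinom n (k + 1) := rfl

lemma qbinom_eq_zero : ∀ {n k : ℕ}, n < k → qbinom n k = 0 := by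
  intro n
  induction n with
  | zero => intro k hk; match k, hk with | k+1, _ => rfl
  | succ n ih =>
    intro k hk
    match k, hk with
    | k+1, hk =>
      rw [qbinom_succ_succ, ih (Nat.lt_of_succ_lt_succ hk),
        ih (Nat.lt_of_succ_lt_succ (Nat.lt_succ_of_lt hk))]
      ring

lemma qbinom_self : ∀ n : ℕ, qbinom n n = 1 := by
  intro n
  induction n with
  | zero => rfl
  | succ n ih => rw [qbinom_succ_succ, ih, qbinom_eq_zero (Nat.lt_succ_self n)]; ring

/-- `[m]_q = 1 + q + ... + q^(m-1)` -/
noncomputable def gs (m : ℕ) : Polynomial ℤ := ∑ i ∈ Finset.range m, Polynomial.X ^ i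

/-- `[m]_q!` -/
noncomputable def gsfact (m : ℕ) : Polynomial ℤ := ∏ i ∈ Finset.range m, gs (i+1)

lemma gs_add (a b : ℕ) : gs (a + b) = gs a + Polynomial.X ^ a * gs b := by
  unfold gs
  rw [Finset.sum_range_add, Finset.mul_sum]
  congr 1
  exact Finset.sum_congr rfl fun i _ => (pow_add _ _ _)

lemma gsfact_succ (m : ℕ) : gsfact (m+1) = gsfact m * gs (m+1) := by
  unfold gsfact; rw [Finset.prod_range_succ]

lemma qbinom_one (m : ℕ) : qbinom m 1 = gs m := by
  induction m with
  | zero => rfl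
  | succ m ih =>
    rw [qbinom_succ_succ, ih, qbinom_zero_right]
    have : gs (1 + m) = gs 1 + Polynomial.X ^ 1 * gs m := gs_add 1 m
    rw [Nat.add_comm 1 m] at this
    rw [this]
    simp [gs]

lemma qbinom_factorial : ∀ n k : ℕ, k ≤ n →
    qbinom n k * (gsfact k * gsfact (n - k)) = gsfact n := by
  intro n
  induction n with
  | zero => intro k hk; interval_cases k; simp [qbinom_zero_right, gsfact]
  | succ n ih =>
    intro k hk
    match k with
    | 0 => simp [qbinom_zero_right, gsfact]
    | j + 1 =>
      rcases Nat.lt_or_ge j n with hj | hj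
      · -- j + 1 ≤ n
        have hj1 : j + 1 ≤ n := hj
        have hsub : n + 1 - (j+1) = (n - j - 1) + 1 := by omega
        have hsub2 : n - (j+1) = n - j - 1 := by omega
        rw [qbinom_succ_succ, add_mul]
        have e1 : qbinom n j * (gsfact (j+1) * gsfact (n + 1 - (j+1))) =
            gs (j+1) * gsfact n := by
          have hsub' : n + 1 - (j + 1) = n - j := by omega
          rw [hsub', gsfact_succ j]
          calc qbinom n j * (gsfact j * gs (j+1) * gsfact (n-j))
              = gs (j+1) * (qbinom n j * (gsfact j * gsfact (n - j))) := by ring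
            _ = gs (j+1) * gsfact n := by rw [ih j (le_of_lt hj)]
        have e2 : Polynomial.X ^ (j+1) * qbinom n (j+1) * (gsfact (j+1) * gsfact (n + 1 - (j+1))) =
            Polynomial.X ^ (j+1) * gs (n - j) * gsfact n := by
          rw [hsub, gsfact_succ (n - j - 1)]
          have h3 : n - j - 1 + 1 = n - j := by omega
          rw [h3]
          calc Polynomial.X ^ (j+1) * qbinom n (j+1) * (gsfact (j+1) * (gsfact (n-j-1) * gs (n-j)))
              = Polynomial.X ^ (j+1) * gs (n-j) * (qbinom n (j+1) * (gsfact (j+1) * gsfact (n - (j+1)))) := by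
                rw [hsub2]; ring
            _ = Polynomial.X ^ (j+1) * gs (n - j) * gsfact n := by rw [ih (j+1) hj1]
        rw [e1, e2, gsfact_succ n]
        have : gs (j+1) + Polynomial.X ^ (j+1) * gs (n - j) = gs (n+1) := by
          rw [← gs_add]; congr 1; omega
        calc gs (j+1) * gsfact n + Polynomial.X ^ (j+1) * gs (n-j) * gsfact n
            = (gs (j+1) + Polynomial.X ^ (j+1) * gs (n-j)) * gsfact n := by ring
          _ = gs (n+1) * gsfact n := by rw [this]
          _ = gsfact n * gs (n+1) := by ring
      · -- j + 1 = n + 1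
        have : j + 1 = n + 1 := by omega
        rw [this, qbinom_self]
        simp [gsfact]

section root
variable {ξ : ℂ} {d : ℕ}

lemma aeval_gs (m : ℕ) : Polynomial.aeval ξ (gs m) = ∑ i ∈ Finset.range m, ξ ^ i := by
  simp [gs]

lemma aeval_gs_ne_zero (hξ : IsPrimitiveRoot ξ d) {m : ℕ} (hm0 : 0 < m) (hmd : m < d) :
    Polynomial.aeval ξ (gs m) ≠ 0 := by
  rw [aeval_gs]
  intro h
  have := geom_sum_mul ξ m
  rw [h, zero_mul] at this
  have hne : ξ ^ m ≠ 1 := hξ.pow_ne_one_of_pos_of_lt hm0.ne' hmd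
  exact hne (by linear_combination -this)

lemma aeval_gsfact_ne_zero (hξ : IsPrimitiveRoot ξ d) {m : ℕ} (hmd : m < d) :
    Polynomial.aeval ξ (gsfact m) ≠ 0 := by
  unfold gsfact
  rw [map_prod]
  exact Finset.prod_ne_zero_iff.2 fun i hi =>
    aeval_gs_ne_zero hξ (Nat.succ_pos i) (by
      have := Finset.mem_range.1 hi; omega)

lemma aeval_gsfact_d (hξ : IsPrimitiveRoot ξ d) (hd : 2 ≤ d) :
    Polynomial.aeval ξ (gsfact d) = 0 := by
  unfold gsfact
  rw [map_prod]
  apply Finset.prod_eq_zero (Finset.mem_range.2 (show d - 1 < d by omega))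
  have : d - 1 + 1 = d := by omega
  rw [this, aeval_gs]
  exact hξ.geom_sum_eq_zero (by omega)

lemma aeval_qbinom_d (hξ : IsPrimitiveRoot ξ d) {j : ℕ} (hj0 : 0 < j) (hjd : j < d) :
    Polynomial.aeval ξ (qbinom d j) = 0 := by
  have hd2 : 2 ≤ d := by omega
  have := congrArg (Polynomial.aeval ξ) (qbinom_factorial d j (le_of_lt hjd))
  rw [map_mul, map_mul, aeval_gsfact_d hξ hd2] at this
  have h1 := aeval_gsfact_ne_zero hξ (show j < d from hjd)
  have h2 := aeval_gsfact_ne_zero hξ (show d - j < d by omega)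
  rcases mul_eq_zero.1 this with h | h
  · exact h
  · exact absurd h (mul_ne_zero h1 h2)

end root

section root2
variable {ξ : ℂ} {d : ℕ}

lemma aeval_pascal (n k : ℕ) :
    Polynomial.aeval ξ (qbinom (n+1) (k+1)) =
      Polynomial.aeval ξ (qbinom n k) + ξ ^ (k+1) * Polynomial.aeval ξ (qbinom n (k+1)) := by
  rw [qbinom_succ_succ]; simp

lemma aeval_qbinom_key (hξ : IsPrimitiveRoot ξ d) (hd : 1 ≤ d) :
    ∀ m k : ℕ, Polynomial.aeval ξ (qbinom (m + d) k) =
      Polynomial.aeval ξ (qbinom m k) +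
        (if d ≤ k then Polynomial.aeval ξ (qbinom m (k - d)) else 0) := by
  intro m
  induction m with
  | zero =>
    intro k
    rw [Nat.zero_add]
    rcases Nat.lt_trichotomy k d with hk | hk | hk
    · rcases Nat.eq_zero_or_pos k with rfl | hk0
      · rw [qbinom_zero_right, qbinom_zero_right, if_neg (by omega : ¬ d ≤ 0)]; ring
      · rw [aeval_qbinom_d hξ hk0 hk, if_neg (by omega : ¬ d ≤ k), qbinom_eq_zero hk0]
        simp
    · subst hk
      rw [qbinom_self, if_pos le_rfl, Nat.sub_self, qbinom_zero_right,
        qbinom_eq_zero (by omega : (0:ℕ) < k)]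
      simp
    · rw [qbinom_eq_zero hk, qbinom_eq_zero (by omega : (0:ℕ) < k), if_pos (by omega : d ≤ k),
        qbinom_eq_zero (by omega : (0:ℕ) < k - d)]
      simp
  | succ m ih =>
    intro k
    match k with
    | 0 => rw [if_neg (by omega : ¬ d ≤ 0), qbinom_zero_right, qbinom_zero_right]; ring
    | j + 1 =>
      have step : m + 1 + d = (m + d) + 1 := by omega
      rw [step, aeval_pascal (m + d) j, ih j, ih (j+1), aeval_pascal m j]
      rcases Nat.lt_trichotomy (j+1) d with hk | hk | hk
      · rw [if_neg (by omega), if_neg (by omega), if_neg (by omega)]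
        ring
      · rw [if_neg (by omega), if_pos (le_of_eq hk.symm), if_pos (le_of_eq hk.symm),
          ← hk, Nat.sub_self, qbinom_zero_right, qbinom_zero_right]
        have : ξ ^ (j+1) = 1 := hk ▸ hξ.pow_eq_one
        rw [this]
        ring
      · have hdj : d ≤ j := by omega
        rw [if_pos hdj, if_pos (by omega), if_pos (by omega)]
        have hsub : j + 1 - d = (j - d) + 1 := by omega
        rw [hsub, aeval_pascal m (j - d)]
        have hxi : ξ ^ (j + 1) = ξ ^ (j - d + 1) := by
          have : j + 1 = (j - d + 1) + d := by omega
          rw [this, pow_add, hξ.pow_eq_one, mul_one]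
        rw [hxi]
        ring

lemma aeval_qbinom_lucas (hξ : IsPrimitiveRoot ξ d) (hd : 1 ≤ d) :
    ∀ n k : ℕ, Polynomial.aeval ξ (qbinom n k) =
      ((n / d).choose (k / d) : ℂ) * Polynomial.aeval ξ (qbinom (n % d) (k % d)) := by
  intro n
  induction n using Nat.strong_induction_on with
  | _ n ih =>
    intro k
    by_cases hn : n < d
    · rw [Nat.div_eq_of_lt hn, Nat.mod_eq_of_lt hn]
      by_cases hk : k < d
      · rw [Nat.div_eq_of_lt hk, Nat.mod_eq_of_lt hk]; simp
      · rw [qbinom_eq_zero (lt_of_lt_of_le hn (not_lt.1 hk)),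
          Nat.choose_eq_zero_of_lt (Nat.div_pos (not_lt.1 hk) hd)]
        simp
    · push_neg at hn
      obtain ⟨m, rfl⟩ : ∃ m, n = m + d := ⟨n - d, (Nat.sub_add_cancel hn).symm⟩
      have hm : m < m + d := by omega
      rw [aeval_qbinom_key hξ hd m k, ih m hm k]
      have hdiv : (m + d) / d = m / d + 1 := Nat.add_div_right m hd
      have hmod : (m + d) % d = m % d := Nat.add_mod_right m d
      rw [hdiv, hmod]
      by_cases hk : d ≤ k
      · rw [if_pos hk, ih m hm (k - d)]
        have hk1 : k / d = (k - d) / d + 1 := by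
          conv_lhs => rw [← Nat.sub_add_cancel hk, Nat.add_div_right _ hd]
        have hk2 : (k - d) % d = k % d := by
          conv_rhs => rw [← Nat.sub_add_cancel hk, Nat.add_mod_right]
        rw [hk1, hk2, Nat.choose_succ_succ]
        push_cast
        ring
      · rw [if_neg hk, Nat.div_eq_of_lt (not_le.1 hk)]
        simp

end root2

/-- The `q`-Lucas theorem: writing `n = n₁ d + n₀` and `k = k₁ d + k₀` with
`0 ≤ n₀, k₀ ≤ d - 1`, we have
`[n choose k]_q ≡ (n₁ choose k₁) ⬝ [n₀ choose k₀]_q  (mod Φ_d(q))`;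
in particular, for `ξ` a primitive `d`-th root of unity,
`[n choose k]_ξ = (n₁ choose k₁) ⬝ [n₀ choose k₀]_ξ`. -/
theorem stmt1 (n k d : ℕ) (hd : 1 ≤ d) :
    (Polynomial.cyclotomic d ℤ ∣
      (qbinom n k - Polynomial.C (((n / d).choose (k / d) : ℤ)) * qbinom (n % d) (k % d))) ∧
    (∀ ξ : ℂ, IsPrimitiveRoot ξ d →
      Polynomial.aeval ξ (qbinom n k)
        = ((n / d).choose (k / d) : ℂ) * Polynomial.aeval ξ (qbinom (n % d) (k % d))) := by
  constructor
  · set ξ : ℂ := Complex.exp (2 * Real.pi * Complex.I / d) with hξdef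
    have hξ : IsPrimitiveRoot ξ d := Complex.isPrimitiveRoot_exp d (by omega)
    have hzero : Polynomial.aeval ξ
        (qbinom n k - Polynomial.C (((n / d).choose (k / d) : ℤ)) * qbinom (n % d) (k % d)) = 0 := by
      rw [map_sub, map_mul, aeval_C, aeval_qbinom_lucas hξ hd n k]
      push_cast
      ring
    rw [Polynomial.cyclotomic_eq_minpoly hξ (by omega)]
    exact minpoly.isIntegrallyClosed_dvd (hξ.isIntegral (by omega)) hzero
  · intro ξ hξ
    exact aeval_qbinom_lucas hξ hd n k
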